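/- Let ε ≥ 0 and 0 ≤ δ ≤ 1, and set x = (e^ε + 2δ − 1)/(e^ε + 1) and y = 0. Then 0 ≤ x ≤ 1, the differential privacy constraints (1 + x − y)/2 ≤ e^ε·(1 + y − x)/2 + δ and (1 + y − x)/2 ≤ e^ε·(1 + x − y)/2 + δ hold, the utility equals (1 + x − y)/2 = (e^ε + δ)/(e^ε + 1), and the influence equals x + y = (e^ε + 2δ − 1)/(e^ε + 1). Hence a joint (non-independent) balanced binary mechanism achieves the same optimal utility (e^ε + δ)/(e^ε + 1) as the best independent one, with influence (e^ε + 2δ − 1)/(e^ε + 1). -/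

import Mathlib

open Real

/-- The joint balanced binary mechanism with x = (e^ε + 2δ − 1)/(e^ε + 1) and y = 0 is
feasible, achieves the optimal utility (e^ε + δ)/(e^ε + 1), and has influence
x + y = (e^ε + 2δ − 1)/(e^ε + 1). -/
theorem joint_balanced_binary_mechanism
    (ε δ : ℝ) (hε : 0 ≤ ε) (hδ₀ : 0 ≤ δ) (hδ₁ : δ ≤ 1)
    (x y : ℝ) (hx : x = (Real.exp ε + 2 * δ - 1) / (Real.exp ε + 1)) (hy : y = 0) :
    (0 ≤ x ∧ x ≤ 1) ∧
    ((1 + x - y) / 2 ≤ Real.exp ε * ((1 + y - x) / 2) + δ) ∧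
    ((1 + y - x) / 2 ≤ Real.exp ε * ((1 + x - y) / 2) + δ) ∧
    ((1 + x - y) / 2 = (Real.exp ε + δ) / (Real.exp ε + 1)) ∧
    (x + y = (Real.exp ε + 2 * δ - 1) / (Real.exp ε + 1)) := by
  have hE : 1 ≤ Real.exp ε := by
    simpa using Real.exp_le_exp.mpr hε
  have hpos : 0 < Real.exp ε + 1 := by linarith
  subst hx hy
  refine ⟨⟨?_, ?_⟩, ?_, ?_, ?_, ?_⟩
  · apply div_nonneg _ hpos.le; linarith
  · rw [div_le_one hpos]; linarith
  · 
    field_simp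
    nlinarith [Real.exp_pos ε]
  · 
    field_simp
    nlinarith [Real.exp_pos ε, sq_nonneg (Real.exp ε - 1)]
  · field_simp; ring
  · ring
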